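/- For an integer d, there exists a primitive v ∈ Γ with (v.v) < 0 and disc(K_v) = d if and only if d > 0 and d ≡ 0 or 2 (mod 6). -/

import Mathlib

open scoped BigOperators

noncomputable section

/-- The negative definite `E₈` Gram matrix. -/
def E8M : Matrix (Fin 8) (Fin 8) ℤ := - CartanMatrix.E₈

/-- The Gram matrix of the cubic lattice `Γ̄ = E₈(-1)² ⊕ U² ⊕ I₀,₃` on `ℤ²³`. -/
def gramC : Fin 23 → Fin 23 → ℤ := fun i j =>
  if i.val < 8 ∧ j.val < 8 then
    E8M ⟨i.val % 8, Nat.mod_lt _ (by norm_num)⟩ ⟨j.val % 8, Nat.mod_lt _ (by norm_num)⟩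
  else if 8 ≤ i.val ∧ i.val < 16 ∧ 8 ≤ j.val ∧ j.val < 16 then
    E8M ⟨(i.val - 8) % 8, Nat.mod_lt _ (by norm_num)⟩ ⟨(j.val - 8) % 8, Nat.mod_lt _ (by norm_num)⟩
  else if (i.val = 16 ∧ j.val = 17) ∨ (i.val = 17 ∧ j.val = 16) ∨
      (i.val = 18 ∧ j.val = 19) ∨ (i.val = 19 ∧ j.val = 18) then 1
  else if 20 ≤ i.val ∧ i = j then -1
  else 0

/-- The bilinear form of the cubic lattice `Γ̄`. -/
def GB (x y : Fin 23 → ℤ) : ℤ := ∑ i, ∑ j, gramC i j * x i * y j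

/-- The class `h² = (0,…,0,1,1,1)`. -/
def h2 : Fin 23 → ℤ := Pi.single 20 1 + Pi.single 21 1 + Pi.single 22 1

/-- A vector is primitive if it is not `m • w` with `|m| ≥ 2`. -/
def PrimitiveC (v : Fin 23 → ℤ) : Prop :=
  ¬ ∃ (m : ℤ) (w : Fin 23 → ℤ), 2 ≤ |m| ∧ v = m • w

/-- Membership in `Γ = (h²)^⊥ ⊂ Γ̄`. -/
def inGamma (x : Fin 23 → ℤ) : Prop := GB h2 x = 0

lemma GB_add_right (x y z : Fin 23 → ℤ) : GB x (y + z) = GB x y + GB x z := by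
  simp [GB, Pi.add_apply, mul_add, Finset.sum_add_distrib]

lemma GB_smul_right (c : ℤ) (x y : Fin 23 → ℤ) : GB x (c • y) = c * GB x y := by
  simp only [GB, Finset.mul_sum]
  refine Finset.sum_congr rfl fun i _ => Finset.sum_congr rfl fun j _ => ?_
  simp only [Pi.smul_apply, smul_eq_mul]; ring

/-- `Γ = (h²)^⊥` as a submodule of `ℤ²³`. -/
def Gamma : Submodule ℤ (Fin 23 → ℤ) where
  carrier := {x | GB h2 x = 0}
  add_mem' := by
    intro a b ha hb
    simp only [Set.mem_setOf_eq] at *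
    rw [GB_add_right, ha, hb, add_zero]
  zero_mem' := by simp [GB]
  smul_mem' := by
    intro c x hx
    simp only [Set.mem_setOf_eq] at *
    rw [GB_smul_right, hx, mul_zero]

/-- The saturation of a submodule. -/
def sat {R M : Type*} [CommRing R] [IsDomain R] [AddCommGroup M] [Module R M] (N : Submodule R M) :
    Submodule R M where
  carrier := {x | ∃ n : R, n ≠ 0 ∧ n • x ∈ N}
  add_mem' := by
    rintro x y ⟨n, hn, hx⟩ ⟨m, hm, hy⟩
    refine ⟨n * m, mul_ne_zero hn hm, ?_⟩
    have h1 : (n * m) • (x + y) = m • (n • x) + n • (m • y) := by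
      rw [smul_add, mul_comm n m, mul_smul, mul_smul, smul_comm m n y]
    rw [h1]
    exact N.add_mem (N.smul_mem m hx) (N.smul_mem n hy)
  zero_mem' := ⟨1, one_ne_zero, by simp⟩
  smul_mem' := by
    rintro c x ⟨n, hn, hx⟩
    exact ⟨n, hn, by rw [smul_comm]; exact N.smul_mem c hx⟩

/-- The saturation `K_v` of `ℤh² + ℤv` in `Γ̄`. -/
def Kv (v : Fin 23 → ℤ) : Submodule ℤ (Fin 23 → ℤ) :=
  sat (Submodule.span ℤ ({h2, v} : Set (Fin 23 → ℤ)))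

/-- `d` is the discriminant of `K_v`: some ℤ-basis of `K_v` has Gram determinant `d`. -/
def discIs (v : Fin 23 → ℤ) (d : ℤ) : Prop :=
  ∃ x y : Fin 23 → ℤ, Kv v = Submodule.span ℤ ({x, y} : Set (Fin 23 → ℤ)) ∧
    d = GB x x * GB y y - GB x y * GB y x

/-- The index of `ℤh² + ℤv` in its saturation `K_v`. -/
def idx (v : Fin 23 → ℤ) : ℕ :=
  (Submodule.span ℤ ({h2, v} : Set (Fin 23 → ℤ))).toAddSubgroup.relIndex
    (Kv v).toAddSubgroup

/-- Isometries of the cubic lattice `Γ̄`. -/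
def IsIsomC (g : (Fin 23 → ℤ) ≃ₗ[ℤ] (Fin 23 → ℤ)) : Prop := ∀ x y, GB (g x) (g y) = GB x y

end

lemma gramC_symm : ∀ i j, gramC i j = gramC j i := by decide

def e (i : Fin 23) : Fin 23 → ℤ := Pi.single i 1

lemma single_left (i : Fin 23) (z : Fin 23 → ℤ) : GB (e i) z = ∑ j, gramC i j * z j := by
  simp [GB, e, Pi.single_apply, ite_mul, Finset.sum_ite_eq]

lemma row_diag (i : Fin 23) (hi : 20 ≤ i.val) (z : Fin 23 → ℤ) : GB (e i) z = - z i := by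
  rw [single_left, Finset.sum_eq_single i]
  · have : gramC i i = -1 := by revert hi; revert i; decide
    rw [this]; ring
  · intro j _ hj
    have : gramC i j = 0 := by revert hj; revert hi; revert j; revert i; decide
    rw [this]; ring
  · simp

lemma GB_add_left (x y z : Fin 23 → ℤ) : GB (x + y) z = GB x z + GB y z := by
  simp [GB, Pi.add_apply, mul_add, add_mul, Finset.sum_add_distrib]

lemma GB_smul_left (c : ℤ) (x y : Fin 23 → ℤ) : GB (c • x) y = c * GB x y := by
  simp only [GB, Finset.mul_sum]
  refine Finset.sum_congr rfl fun i _ => Finset.sum_congr rfl fun j _ => ?_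
  simp only [Pi.smul_apply, smul_eq_mul]; ring

lemma GB_h2_left (z : Fin 23 → ℤ) : GB h2 z = -(z 20) - z 21 - z 22 := by
  have h : h2 = e 20 + e 21 + e 22 := rfl
  rw [h, GB_add_left, GB_add_left, row_diag 20 (by decide), row_diag 21 (by decide),
    row_diag 22 (by decide)]
  ring

lemma GB_comm (x y : Fin 23 → ℤ) : GB x y = GB y x := by
  rw [GB, GB, Finset.sum_comm]
  exact Finset.sum_congr rfl fun a _ => Finset.sum_congr rfl fun b _ => by
    rw [gramC_symm]; ring

lemma GB_single_single (i j : Fin 23) : GB (e i) (e j) = gramC i j := by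
  simp [GB, e, Pi.single_apply, mul_ite, ite_mul, Finset.sum_ite_eq]

lemma zmod2_mul_self : ∀ a : ZMod 2, a * a = a := by decide
lemma zmod2_add_self : ∀ a : ZMod 2, a + a = 0 := by decide
lemma zmod2_neg : ∀ a : ZMod 2, -a = a := by decide
lemma diag_cast : ∀ i : Fin 23, ((gramC i i : ℤ) : ZMod 2) = if 20 ≤ i.val then 1 else 0 := by
  decide

lemma GB_char (z : Fin 23 → ℤ) : ((GB z z : ℤ) : ZMod 2) = ((GB h2 z : ℤ) : ZMod 2) := by
  have hsplit : GB z z = (∑ i, gramC i i * z i * z i)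
      + ∑ i, ∑ j ∈ Finset.univ.erase i, gramC i j * z i * z j := by
    rw [GB, ← Finset.sum_add_distrib]
    exact Finset.sum_congr rfl fun i _ =>
      (Finset.add_sum_erase Finset.univ _ (Finset.mem_univ i)).symm
  rw [hsplit, GB_h2_left]
  push_cast
  have hoff : (∑ i : Fin 23, ∑ j ∈ Finset.univ.erase i,
      ((gramC i j : ℤ) : ZMod 2) * (z i : ZMod 2) * (z j : ZMod 2)) = 0 := by
    rw [Finset.sum_sigma' Finset.univ (fun i => Finset.univ.erase i)
      (fun i j => ((gramC i j : ℤ) : ZMod 2) * ((z i : ℤ) : ZMod 2) * ((z j : ℤ) : ZMod 2))]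
    refine Finset.sum_involution (fun p _ => ⟨p.2, p.1⟩) ?_ ?_ ?_ ?_
    · intro p hp
      rw [gramC_symm]
      have : ((gramC p.2 p.1 : ℤ) : ZMod 2) * (z p.2 : ZMod 2) * (z p.1 : ZMod 2)
          = ((gramC p.2 p.1 : ℤ) : ZMod 2) * (z p.1 : ZMod 2) * (z p.2 : ZMod 2) := by ring
      rw [← this]
      exact zmod2_add_self _
    · intro p hp _
      obtain ⟨i, j⟩ := p
      have hji : j ≠ i := (Finset.mem_erase.mp (Finset.mem_sigma.mp hp).2).1
      intro h
      injection h with h1 h2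
      exact hji h1
    · intro p hp
      obtain ⟨i, j⟩ := p
      have hji : j ≠ i := (Finset.mem_erase.mp (Finset.mem_sigma.mp hp).2).1
      exact Finset.mem_sigma.mpr ⟨Finset.mem_univ _, Finset.mem_erase.mpr ⟨fun h => hji h.symm, Finset.mem_univ _⟩⟩
    · intro p hp; rfl
  rw [hoff, add_zero]
  have hdiag : (∑ i : Fin 23, ((gramC i i : ℤ) : ZMod 2) * (z i : ZMod 2) * (z i : ZMod 2))
      = ∑ i : Fin 23, (if 20 ≤ i.val then ((z i : ℤ) : ZMod 2) else 0) := by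
    refine Finset.sum_congr rfl fun i _ => ?_
    rw [diag_cast, mul_assoc, zmod2_mul_self]
    split <;> simp
  rw [hdiag, ← Finset.sum_filter]
  have hfe : Finset.univ.filter (fun i : Fin 23 => 20 ≤ i.val) = {20, 21, 22} := by decide
  rw [hfe, Finset.sum_insert (by decide), Finset.sum_insert (by decide),
    Finset.sum_singleton]
  simp only [sub_eq_add_neg, zmod2_neg]
  ring

lemma L2 : ∀ A B C P Q : ZMod 2, A = P*A + Q*B → C = P*B + Q*C →
    P*P*A + P*Q*B + Q*P*B + Q*Q*C = 1 → A*C - B*B = 0 := by decide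

lemma L3 : ∀ A B C P Q : ZMod 3, P*P*A + P*Q*B + Q*P*B + Q*Q*C = 0 →
    A*C - B*B = 1 → P = 0 ∧ Q = 0 := by decide

lemma GB_pair (p q r s : ℤ) (x y : Fin 23 → ℤ) :
    GB (p • x + q • y) (r • x + s • y)
      = p*r * GB x x + p*s * GB x y + q*r * GB y x + q*s * GB y y := by
  simp only [GB_add_left, GB_add_right, GB_smul_left, GB_smul_right]; ring

lemma le_sat {N : Submodule ℤ (Fin 23 → ℤ)} : N ≤ sat N :=
  fun x hx => ⟨1, one_ne_zero, by simpa using hx⟩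

lemma h2_mem_Kv (v : Fin 23 → ℤ) : h2 ∈ Kv v :=
  le_sat (Submodule.subset_span (Set.mem_insert _ _))

lemma v_mem_Kv (v : Fin 23 → ℤ) : v ∈ Kv v :=
  le_sat (Submodule.subset_span (Set.mem_insert_of_mem _ rfl))

lemma prim_of_coord {v : Fin 23 → ℤ} (i : Fin 23) (h : v i = 1 ∨ v i = -1) : PrimitiveC v := by
  rintro ⟨m, w, hm, rfl⟩
  have hv : (m • w) i = m * w i := rfl
  have hdvd : m ∣ 1 := by
    rcases h with h | h
    · exact ⟨w i, by rw [← h]; exact hv.symm⟩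
    · exact (dvd_neg).mp ⟨w i, by rw [← h]; exact hv.symm⟩
  rcases Int.isUnit_eq_one_or (isUnit_of_dvd_one hdvd) with h1 | h1 <;>
    rw [h1] at hm <;> norm_num at hm

lemma prim_h2 : PrimitiveC h2 := prim_of_coord 20 (Or.inl (by decide))

lemma GB_h2_h2 : GB h2 h2 = -3 := by rw [GB_h2_left]; decide

private lemma g_16_16 : gramC 16 16 = 0 := by decide
private lemma g_16_17 : gramC 16 17 = 1 := by decide
private lemma g_16_20 : gramC 16 20 = 0 := by decide
private lemma g_16_21 : gramC 16 21 = 0 := by decide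
private lemma g_16_22 : gramC 16 22 = 0 := by decide
private lemma g_17_16 : gramC 17 16 = 1 := by decide
private lemma g_17_17 : gramC 17 17 = 0 := by decide
private lemma g_17_20 : gramC 17 20 = 0 := by decide
private lemma g_17_21 : gramC 17 21 = 0 := by decide
private lemma g_17_22 : gramC 17 22 = 0 := by decide
private lemma g_20_16 : gramC 20 16 = 0 := by decide
private lemma g_20_17 : gramC 20 17 = 0 := by decide
private lemma g_20_20 : gramC 20 20 = -1 := by decide
private lemma g_20_21 : gramC 20 21 = 0 := by decide
private lemma g_20_22 : gramC 20 22 = 0 := by decide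
private lemma g_21_16 : gramC 21 16 = 0 := by decide
private lemma g_21_17 : gramC 21 17 = 0 := by decide
private lemma g_21_20 : gramC 21 20 = 0 := by decide
private lemma g_21_21 : gramC 21 21 = -1 := by decide
private lemma g_21_22 : gramC 21 22 = 0 := by decide
private lemma g_22_16 : gramC 22 16 = 0 := by decide
private lemma g_22_17 : gramC 22 17 = 0 := by decide
private lemma g_22_20 : gramC 22 20 = 0 := by decide
private lemma g_22_21 : gramC 22 21 = 0 := by decide
private lemma g_22_22 : gramC 22 22 = -1 := by decide

set_option maxHeartbeats 1000000 in
/-- An integer `d` arises as `disc K_v` for some primitive `v ∈ Γ` of negative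
square iff `d > 0` and `d ≡ 0` or `2 (mod 6)`. -/
theorem stmt_7 (d : ℤ) :
    (∃ v : Fin 23 → ℤ, inGamma v ∧ PrimitiveC v ∧ GB v v < 0 ∧ discIs v d) ↔
    (0 < d ∧ (d % 6 = 0 ∨ d % 6 = 2)) := by
  constructor
  · rintro ⟨v, hGamma, hprim, hneg, x, y, hK, hd⟩
    have hsym : GB y x = GB x y := GB_comm y x
    set a := GB x x with ha
    set b := GB x y with hb
    set c := GB y y with hc
    rw [hsym] at hd
    obtain ⟨p, q, hpq⟩ := Submodule.mem_span_pair.mp (hK ▸ h2_mem_Kv v)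
    obtain ⟨r, s, hrs⟩ := Submodule.mem_span_pair.mp (hK ▸ v_mem_Kv v)
    have E1 : p*p*a + p*q*b + q*p*b + q*q*c = -3 := by
      have h := GB_pair p q p q x y
      rw [hpq, GB_h2_h2, hsym] at h
      linarith
    have E2 : p*r*a + p*s*b + q*r*b + q*s*c = 0 := by
      have h := GB_pair p q r s x y
      rw [hpq, hrs, hGamma, hsym] at h
      linarith
    have E3 : GB v v = r*r*a + r*s*b + s*r*b + s*s*c := by
      have h := GB_pair r s r s x y
      rw [hrs, hsym] at h
      linarith
    -- positivity
    have key : (p*s - q*r)^2 * d = 3 * (-(r*r*a + r*s*b + s*r*b + s*s*c)) := by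
      rw [hd]
      linear_combination (r*r*a + r*s*b + s*r*b + s*s*c) * E1
        - (p*r*a + p*s*b + q*r*b + q*s*c) * E2
    have hVneg : r*r*a + r*s*b + s*r*b + s*s*c < 0 := by rw [← E3]; exact hneg
    have hdpos : 0 < d := by nlinarith [sq_nonneg (p*s - q*r)]
    -- coprimality of p q
    have hgcd : Int.gcd p q = 1 := by
      by_contra hne
      have h0 : Int.gcd p q ≠ 0 := by
        intro h0
        obtain ⟨hp0, hq0⟩ := Int.gcd_eq_zero_iff.mp h0
        rw [hp0, hq0] at hpq
        simp only [zero_smul, add_zero] at hpq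
        have := congrFun hpq 20
        simp [h2, Pi.single_apply] at this
      have hge : 2 ≤ Int.gcd p q := by omega
      obtain ⟨p1, hp1⟩ := (Int.gcd_dvd_left p q : (Int.gcd p q : ℤ) ∣ p)
      obtain ⟨q1, hq1⟩ := (Int.gcd_dvd_right p q : (Int.gcd p q : ℤ) ∣ q)
      refine prim_h2 ⟨(Int.gcd p q : ℤ), p1 • x + q1 • y, ?_, ?_⟩
      · rw [abs_of_nonneg (by positivity)]
        exact_mod_cast hge
      · rw [← hpq, smul_add, smul_smul, smul_smul, ← hp1, ← hq1]
    -- mod 2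
    have hd2 : (2 : ℤ) ∣ d := by
      have charx : ((a : ℤ) : ZMod 2) = ((p:ℤ) : ZMod 2) * ((a:ℤ) : ZMod 2)
          + ((q:ℤ) : ZMod 2) * ((b:ℤ) : ZMod 2) := by
        have h := GB_char x
        have hx : GB h2 x = p * a + q * b := by
          rw [← hpq, GB_add_left, GB_smul_left, GB_smul_left, ← ha, hsym, hb]
        rw [hx] at h
        push_cast at h
        rw [ha]
        exact_mod_cast h
      have chary : ((c : ℤ) : ZMod 2) = ((p:ℤ) : ZMod 2) * ((b:ℤ) : ZMod 2)
          + ((q:ℤ) : ZMod 2) * ((c:ℤ) : ZMod 2) := by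
        have h := GB_char y
        have hy : GB h2 y = p * b + q * c := by
          rw [← hpq, GB_add_left, GB_smul_left, GB_smul_left, ← hb, hc]
        rw [hy] at h
        push_cast at h
        rw [hc]
        exact_mod_cast h
      have E12 : ((p:ℤ) : ZMod 2) * ((p:ℤ) : ZMod 2) * ((a:ℤ) : ZMod 2)
          + ((p:ℤ) : ZMod 2) * ((q:ℤ) : ZMod 2) * ((b:ℤ) : ZMod 2)
          + ((q:ℤ) : ZMod 2) * ((p:ℤ) : ZMod 2) * ((b:ℤ) : ZMod 2)
          + ((q:ℤ) : ZMod 2) * ((q:ℤ) : ZMod 2) * ((c:ℤ) : ZMod 2) = 1 := by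
        have h := congrArg (fun t : ℤ => (t : ZMod 2)) E1
        push_cast at h
        rw [h]
        decide
      have h0 := L2 _ _ _ _ _ charx chary E12
      have : ((d : ℤ) : ZMod 2) = 0 := by
        rw [hd]; push_cast; exact h0
      exact (ZMod.intCast_zmod_eq_zero_iff_dvd d 2).mp this
    -- mod 3
    have hd3 : ¬ (3 : ℤ) ∣ (d - 1) := by
      intro hdvd
      have hcast : ((d : ℤ) : ZMod 3) = 1 := by
        have := (ZMod.intCast_zmod_eq_zero_iff_dvd (d - 1) 3).mpr hdvd
        push_cast at this
        linear_combination this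
      have E13 : ((p:ℤ) : ZMod 3) * ((p:ℤ) : ZMod 3) * ((a:ℤ) : ZMod 3)
          + ((p:ℤ) : ZMod 3) * ((q:ℤ) : ZMod 3) * ((b:ℤ) : ZMod 3)
          + ((q:ℤ) : ZMod 3) * ((p:ℤ) : ZMod 3) * ((b:ℤ) : ZMod 3)
          + ((q:ℤ) : ZMod 3) * ((q:ℤ) : ZMod 3) * ((c:ℤ) : ZMod 3) = 0 := by
        have h := congrArg (fun t : ℤ => (t : ZMod 3)) E1
        push_cast at h
        rw [h]
        decide
      have hdet : ((a:ℤ) : ZMod 3) * ((c:ℤ) : ZMod 3)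
          - ((b:ℤ) : ZMod 3) * ((b:ℤ) : ZMod 3) = 1 := by
        rw [← hcast, hd]; push_cast; ring
      obtain ⟨hp3, hq3⟩ := L3 _ _ _ _ _ E13 hdet
      have hp : (3:ℤ) ∣ p := (ZMod.intCast_zmod_eq_zero_iff_dvd p 3).mp hp3
      have hq : (3:ℤ) ∣ q := (ZMod.intCast_zmod_eq_zero_iff_dvd q 3).mp hq3
      obtain ⟨u, w, huw⟩ := Int.isCoprime_iff_gcd_eq_one.mpr hgcd
      have : (3:ℤ) ∣ 1 := huw ▸ dvd_add (Dvd.dvd.mul_left hp u) (Dvd.dvd.mul_left hq w)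
      norm_num at this
    refine ⟨hdpos, ?_⟩
    omega
  · rintro ⟨hdpos, hmod | hmod⟩
    · -- d ≡ 0 mod 6
      set k := d / 6 with hkdef
      have hd6 : d = 6 * k := by omega
      have hk1 : 1 ≤ k := by omega
      set v : Fin 23 → ℤ := (1:ℤ) • e 16 + (-k) • e 17 with hv
      have hv20 : v 20 = 0 := by simp [hv, e, Pi.single_apply]
      have hv21 : v 21 = 0 := by simp [hv, e, Pi.single_apply]
      have hv22 : v 22 = 0 := by simp [hv, e, Pi.single_apply]
      have hv16 : v 16 = 1 := by simp [hv, e, Pi.single_apply]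
      have hGam : GB h2 v = 0 := by rw [GB_h2_left, hv20, hv21, hv22]; ring
      have hvv : GB v v = -(2*k) := by
        rw [hv, GB_pair, GB_single_single, GB_single_single, GB_single_single,
          GB_single_single, g_16_16, g_16_17, g_17_16, g_17_17]
        ring
      refine ⟨v, hGam, prim_of_coord 16 (Or.inl hv16), by rw [hvv]; linarith, h2, v, ?_, ?_⟩
      · apply le_antisymm
        · rintro z ⟨n, hn, hzn⟩
          obtain ⟨A, B, hAB⟩ := Submodule.mem_span_pair.mp hzn
          have c20 : n * z 20 = A := by
            have h := congrFun hAB 20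
            simp only [Pi.add_apply, Pi.smul_apply, smul_eq_mul, hv20] at h
            have h220 : h2 20 = 1 := by decide
            rw [h220] at h
            linarith
          have c16 : n * z 16 = B := by
            have h := congrFun hAB 16
            simp only [Pi.add_apply, Pi.smul_apply, smul_eq_mul, hv16] at h
            have h216 : h2 16 = 0 := by decide
            rw [h216] at h
            linarith
          have hzeq : n • (z 20 • h2 + z 16 • v) = n • z := by
            rw [smul_add, smul_smul, smul_smul, c20, c16]
            exact hAB
          rw [(smul_right_injective (Fin 23 → ℤ) hn hzeq).symm]
          exact Submodule.mem_span_pair.mpr ⟨z 20, z 16, rfl⟩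
        · exact le_sat
      · rw [GB_h2_h2, hvv, hGam, GB_comm v h2, hGam, hd6]
        ring
    · -- d ≡ 2 mod 6
      set m : ℤ := -(d / 6) with hmdef
      have hd6 : d = 2 - 6 * m := by omega
      have hm0 : m ≤ 0 := by omega
      set v : Fin 23 → ℤ := (3:ℤ) • e 16 + (3*m) • e 17 + (2:ℤ) • e 20
        + (-1:ℤ) • e 21 + (-1:ℤ) • e 22 with hv
      set w : Fin 23 → ℤ := (1:ℤ) • e 16 + m • e 17 + (1:ℤ) • e 20 with hw
      have hv16 : v 16 = 3 := by simp [hv, e, Pi.single_apply]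
      have hv20 : v 20 = 2 := by simp [hv, e, Pi.single_apply]
      have hv21 : v 21 = -1 := by simp [hv, e, Pi.single_apply]
      have hv22 : v 22 = -1 := by simp [hv, e, Pi.single_apply]
      have hw20 : w 20 = 1 := by simp [hw, e, Pi.single_apply]
      have hw21 : w 21 = 0 := by simp [hw, e, Pi.single_apply]
      have hw22 : w 22 = 0 := by simp [hw, e, Pi.single_apply]
      have hw16 : w 16 = 1 := by simp [hw, e, Pi.single_apply]
      have h2e : h2 = e 20 + e 21 + e 22 := rfl
      have hGam : GB h2 v = 0 := by rw [GB_h2_left, hv20, hv21, hv22]; ring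
      have hvv : GB v v = 18 * m - 6 := by
        rw [hv]
        simp only [GB_add_left, GB_add_right, GB_smul_left, GB_smul_right, GB_single_single,
          g_16_16, g_16_17, g_16_20, g_16_21, g_16_22, g_17_16, g_17_17, g_17_20, g_17_21, g_17_22, g_20_16, g_20_17, g_20_20, g_20_21, g_20_22, g_21_16, g_21_17, g_21_20, g_21_21, g_21_22, g_22_16, g_22_17, g_22_20, g_22_21, g_22_22]
        ring
      have hww : GB w w = 2 * m - 1 := by
        rw [hw]
        simp only [GB_add_left, GB_add_right, GB_smul_left, GB_smul_right, GB_single_single,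
          g_16_16, g_16_17, g_16_20, g_16_21, g_16_22, g_17_16, g_17_17, g_17_20, g_17_21, g_17_22, g_20_16, g_20_17, g_20_20, g_20_21, g_20_22, g_21_16, g_21_17, g_21_20, g_21_21, g_21_22, g_22_16, g_22_17, g_22_20, g_22_21, g_22_22]
        ring
      have hh2w : GB h2 w = -1 := by rw [GB_h2_left, hw20, hw21, hw22]; ring
      have h3w : (1:ℤ) • h2 + (1:ℤ) • v = (3:ℤ) • w := by
        rw [hv, hw, h2e]; module
      have hid : ∀ A B : ℤ, A • h2 + B • v = (A - B) • h2 + (3*B) • w := by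
        intro A B
        rw [hv, hw, h2e]; module
      refine ⟨v, hGam, prim_of_coord 21 (Or.inr hv21), by rw [hvv]; linarith, h2, w, ?_, ?_⟩
      · apply le_antisymm
        · rintro z ⟨n, hn, hzn⟩
          obtain ⟨A, B, hAB⟩ := Submodule.mem_span_pair.mp hzn
          have c21 : n * z 21 = A - B := by
            have h := congrFun hAB 21
            simp only [Pi.add_apply, Pi.smul_apply, smul_eq_mul, hv21] at h
            have h221 : h2 21 = 1 := by decide
            rw [h221] at h
            linarith
          have c16 : n * z 16 = 3 * B := by
            have h := congrFun hAB 16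
            simp only [Pi.add_apply, Pi.smul_apply, smul_eq_mul, hv16] at h
            have h216 : h2 16 = 0 := by decide
            rw [h216] at h
            linarith
          have hzeq : n • (z 21 • h2 + z 16 • w) = n • z := by
            rw [smul_add, smul_smul, smul_smul, c21, c16, ← hid A B]
            exact hAB
          rw [(smul_right_injective (Fin 23 → ℤ) hn hzeq).symm]
          exact Submodule.mem_span_pair.mpr ⟨z 21, z 16, rfl⟩
        · apply Submodule.span_le.mpr
          rintro t ht
          simp only [Set.mem_insert_iff, Set.mem_singleton_iff] at ht
          rcases ht with rfl | rfl
          · exact h2_mem_Kv v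
          · exact ⟨3, by norm_num, Submodule.mem_span_pair.mpr ⟨1, 1, h3w⟩⟩
      · rw [GB_h2_h2, hww, hh2w, GB_comm w h2, hh2w, hd6]
        ring
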